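/- Let $(U,\mathcal{W})$ be a set cover instance (each set in $\mathcal{W}$ is a subset of $U$, and for each $u\in U$ the singleton $\{u\}$ is in $\mathcal{W}$). Define the graph $H$ on vertex set $U$ where $u$ and $u'$ are adjacent iff some set $W\in\mathcal{W}$ contains both $u$ and $u'$. Then for any maximal matching $M$ in $H$, $(|U| - \mathrm{SC}(U,\mathcal{W}))/2 \le |M| \le |U| - \mathrm{SC}(U,\mathcal{W})$, where $\mathrm{SC}(U,\mathcal{W})$ denotes the minimum size of a subcollection of $\mathcal{W}$ whose union is $U$. -/

import Mathlib

/-- Set cover vs. maximal matching: for a set cover instance `(U, 𝒲)` containing all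
singletons, and the graph `H` on `U` joining two elements iff some set of `𝒲` contains
both, every maximal matching `M` of `H` satisfies
`(|U| - SC)/2 ≤ |M| ≤ |U| - SC`, where `SC` is the minimum set cover size. -/
theorem stmt0 {α : Type*} [DecidableEq α] (U : Finset α) (𝒲 : Finset (Finset α))
    (hsub : ∀ W ∈ 𝒲, W ⊆ U)
    (hsing : ∀ u ∈ U, ({u} : Finset α) ∈ 𝒲)
    (sc : ℕ)
    (hsc : IsLeast {n : ℕ | ∃ C ⊆ 𝒲, (∀ u ∈ U, ∃ W ∈ C, u ∈ W) ∧ C.card = n} sc)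
    (M : Finset (Sym2 α))
    (hedge : ∀ e ∈ M, ∃ u v : α, u ∈ U ∧ v ∈ U ∧ u ≠ v ∧
      (∃ W ∈ 𝒲, u ∈ W ∧ v ∈ W) ∧ e = s(u, v))
    (hdisj : ∀ e ∈ M, ∀ e' ∈ M, e ≠ e' → ∀ x : α, x ∈ e → x ∉ e')
    (hmax : ∀ u v : α, u ∈ U → v ∈ U → u ≠ v → (∃ W ∈ 𝒲, u ∈ W ∧ v ∈ W) →
      ∃ e ∈ M, u ∈ e ∨ v ∈ e) :
    U.card - sc ≤ 2 * M.card ∧ M.card ≤ U.card - sc := by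
  classical
  set g : Sym2 α → Finset α := fun e => U.filter (· ∈ e) with hg
  set V : Finset α := M.biUnion g with hV
  have hVsub : V ⊆ U := by
    intro x hx
    rcases Finset.mem_biUnion.mp hx with ⟨e, _, hxe⟩
    exact (Finset.mem_filter.mp hxe).1
  have hgcard : ∀ e ∈ M, (g e).card = 2 := by
    intro e he
    obtain ⟨u, v, hu, hv, hne, _, rfl⟩ := hedge e he
    have : g (s(u,v)) = {u, v} := by
      ext x
      simp only [hg, Finset.mem_filter, Sym2.mem_iff, Finset.mem_insert,
        Finset.mem_singleton]
      constructor
      · rintro ⟨_, h⟩; exact h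
      · rintro (rfl | rfl)
        · exact ⟨hu, Or.inl rfl⟩
        · exact ⟨hv, Or.inr rfl⟩
    rw [this, Finset.card_pair hne]
  have hVcard : V.card = 2 * M.card := by
    rw [hV, Finset.card_biUnion]
    · rw [Finset.sum_congr rfl hgcard, Finset.sum_const, smul_eq_mul, mul_comm]
    · intro e he e' he' hne
      rw [Function.onFun, Finset.disjoint_left]
      intro x hx hx'
      exact hdisj e he e' he' hne x (Finset.mem_filter.mp hx).2
        (Finset.mem_filter.mp hx').2
  have hmemV : ∀ u ∈ U, (u ∈ V ↔ ∃ e ∈ M, u ∈ e) := by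
    intro u hu
    constructor
    · intro h
      rcases Finset.mem_biUnion.mp h with ⟨e, he, hue⟩
      exact ⟨e, he, (Finset.mem_filter.mp hue).2⟩
    · rintro ⟨e, he, hue⟩
      exact Finset.mem_biUnion.mpr ⟨e, he, Finset.mem_filter.mpr ⟨hu, hue⟩⟩
  -- Upper bound: build a cover of size ≤ |M| + |U \ V|
  have hP : ∀ e ∈ M, ∃ W ∈ 𝒲, ∀ x ∈ e, x ∈ W := by
    intro e he
    obtain ⟨u, v, hu, hv, hne, ⟨W, hW, huW, hvW⟩, rfl⟩ := hedge e he
    refine ⟨W, hW, ?_⟩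
    intro x hx
    rcases Sym2.mem_iff.mp hx with rfl | rfl <;> assumption
  set pick : Sym2 α → Finset α :=
    fun e => if h : ∃ W ∈ 𝒲, ∀ x ∈ e, x ∈ W then h.choose else ∅ with hpick
  have hpick1 : ∀ e ∈ M, pick e ∈ 𝒲 ∧ ∀ x ∈ e, x ∈ pick e := by
    intro e he
    have h := hP e he
    simp only [hpick, dif_pos h]
    exact ⟨h.choose_spec.1, h.choose_spec.2⟩
  set C1 : Finset (Finset α) :=
    M.image pick ∪ (U \ V).image (fun u => ({u} : Finset α)) with hC1
  have hC1sub : C1 ⊆ 𝒲 := by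
    intro W hW
    rcases Finset.mem_union.mp hW with h | h
    · rcases Finset.mem_image.mp h with ⟨e, he, rfl⟩
      exact (hpick1 e he).1
    · rcases Finset.mem_image.mp h with ⟨u, hu, rfl⟩
      exact hsing u (Finset.mem_sdiff.mp hu).1
  have hC1cov : ∀ u ∈ U, ∃ W ∈ C1, u ∈ W := by
    intro u hu
    by_cases h : u ∈ V
    · rcases (hmemV u hu).mp h with ⟨e, he, hue⟩
      exact ⟨pick e, Finset.mem_union_left _ (Finset.mem_image_of_mem _ he),
        (hpick1 e he).2 u hue⟩
    · exact ⟨{u}, Finset.mem_union_right _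
        (Finset.mem_image_of_mem _ (Finset.mem_sdiff.mpr ⟨hu, h⟩)),
        Finset.mem_singleton_self u⟩
  have hsc1 : sc ≤ C1.card := hsc.2 ⟨C1, hC1sub, hC1cov, rfl⟩
  have hC1card : C1.card ≤ M.card + (U.card - V.card) := by
    calc C1.card ≤ (M.image pick).card + ((U \ V).image (fun u => ({u} : Finset α))).card :=
          Finset.card_union_le _ _
      _ ≤ M.card + (U \ V).card :=
          Nat.add_le_add (Finset.card_image_le) (Finset.card_image_le)
      _ = M.card + (U.card - V.card) := by rw [Finset.card_sdiff_of_subset hVsub]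
  -- Lower bound: each cover set contains at most one unmatched vertex
  obtain ⟨C, hCsub, hCcov, hCcard⟩ := hsc.1
  have hlow : (U \ V).card ≤ C.card := by
    set f : α → Finset α := fun u => if h : ∃ W ∈ C, u ∈ W then h.choose else ∅ with hf
    have hf1 : ∀ u ∈ U, f u ∈ C ∧ u ∈ f u := by
      intro u hu
      have h := hCcov u hu
      simp only [hf, dif_pos h]
      exact ⟨h.choose_spec.1, h.choose_spec.2⟩
    apply Finset.card_le_card_of_injOn f
    · intro u hu
      exact (hf1 u (Finset.mem_sdiff.mp hu).1).1
    · intro u hu v hv hfe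
      by_contra hne
      obtain ⟨huU, huV⟩ := Finset.mem_sdiff.mp hu
      obtain ⟨hvU, hvV⟩ := Finset.mem_sdiff.mp hv
      obtain ⟨e, he, hcase⟩ := hmax u v huU hvU hne
        ⟨f u, hCsub (hf1 u huU).1, (hf1 u huU).2, hfe ▸ (hf1 v hvU).2⟩
      rcases hcase with h | h
      · exact huV ((hmemV u huU).mpr ⟨e, he, h⟩)
      · exact hvV ((hmemV v hvU).mpr ⟨e, he, h⟩)
  have hVle : V.card ≤ U.card := Finset.card_le_card hVsub
  rw [Finset.card_sdiff_of_subset hVsub, hCcard] at hlow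
  omega
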